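/- Let k be a field, V an infinite-dimensional k-vector space, E the endomorphism ring of V, S the set of endomorphisms of V of finite rank (a two-sided ideal of E), and let R = k·1 + S be the k-subalgebra of E generated by the identity and S. Then the two-sided ideals of R are exactly 0, S and R. -/

import Mathlib

universe u v

variable (k : Type u) (V : Type v) [Field k] [AddCommGroup V] [Module k V]

/-- The set of finite-rank endomorphisms of the `k`-vector space `V`. -/
def finiteRankEnd : Set (Module.End k V) :=
  {s | FiniteDimensional k (LinearMap.range s)}

variable {k V}

lemma finiteRankEnd.add {s t : Module.End k V} (hs : s ∈ finiteRankEnd k V)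
    (ht : t ∈ finiteRankEnd k V) : s + t ∈ finiteRankEnd k V := by
  haveI : FiniteDimensional k (LinearMap.range s) := hs
  haveI : FiniteDimensional k (LinearMap.range t) := ht
  refine Submodule.finiteDimensional_of_le (S₂ := LinearMap.range s ⊔ LinearMap.range t) ?_
  rintro x ⟨v, rfl⟩
  exact Submodule.mem_sup.2 ⟨s v, ⟨v, rfl⟩, t v, ⟨v, rfl⟩, rfl⟩

lemma finiteRankEnd.neg {s : Module.End k V} (hs : s ∈ finiteRankEnd k V) :
    -s ∈ finiteRankEnd k V := by
  haveI : FiniteDimensional k (LinearMap.range s) := hs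
  show FiniteDimensional k (LinearMap.range (-s))
  rw [LinearMap.range_neg]
  exact hs

lemma finiteRankEnd.smul (a : k) {s : Module.End k V} (hs : s ∈ finiteRankEnd k V) :
    a • s ∈ finiteRankEnd k V := by
  haveI : FiniteDimensional k (LinearMap.range s) := hs
  refine Submodule.finiteDimensional_of_le (S₂ := LinearMap.range s) ?_
  rintro x ⟨v, rfl⟩
  exact ⟨a • v, by simp⟩

lemma finiteRankEnd.mul_left (f : Module.End k V) {s : Module.End k V}
    (hs : s ∈ finiteRankEnd k V) : s * f ∈ finiteRankEnd k V := by
  haveI : FiniteDimensional k (LinearMap.range s) := hs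
  refine Submodule.finiteDimensional_of_le (S₂ := LinearMap.range s) ?_
  rintro x ⟨v, rfl⟩
  exact ⟨f v, rfl⟩

lemma finiteRankEnd.mul_right (f : Module.End k V) {s : Module.End k V}
    (hs : s ∈ finiteRankEnd k V) : f * s ∈ finiteRankEnd k V := by
  haveI : FiniteDimensional k (LinearMap.range s) := hs
  show FiniteDimensional k (LinearMap.range (f * s))
  rw [Module.End.mul_eq_comp, LinearMap.range_comp]
  infer_instance

variable (k V) in
/-- The subring `R = k·1 + S` of the endomorphism ring of `V`, where `S` is the
set of finite-rank endomorphisms. -/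
def kPlusFiniteRank : Subring (Module.End k V) where
  carrier := {f | ∃ a : k, ∃ s ∈ finiteRankEnd k V, f = a • 1 + s}
  zero_mem' := ⟨0, 0, by
    show FiniteDimensional k (LinearMap.range (0 : Module.End k V))
    rw [LinearMap.range_zero]; infer_instance, by simp⟩
  one_mem' := ⟨1, 0, by
    show FiniteDimensional k (LinearMap.range (0 : Module.End k V))
    rw [LinearMap.range_zero]; infer_instance, by simp⟩
  add_mem' := by
    rintro f g ⟨a, s, hs, rfl⟩ ⟨b, t, ht, rfl⟩
    exact ⟨a + b, s + t, finiteRankEnd.add hs ht, by rw [add_smul]; abel⟩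
  neg_mem' := by
    rintro f ⟨a, s, hs, rfl⟩
    exact ⟨-a, -s, finiteRankEnd.neg hs, by rw [neg_smul]; abel⟩
  mul_mem' := by
    rintro f g ⟨a, s, hs, rfl⟩ ⟨b, t, ht, rfl⟩
    refine ⟨a * b, a • t + b • s + s * t, ?_, ?_⟩
    · exact finiteRankEnd.add (finiteRankEnd.add (finiteRankEnd.smul a ht)
        (finiteRankEnd.smul b hs)) ((finiteRankEnd.mul_left t) hs)
    · simp only [mul_add, add_mul, smul_mul_assoc, mul_smul_comm, one_mul, mul_one]
      module


open Module LinearMap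

lemma finiteRankEnd.zero : (0 : Module.End k V) ∈ finiteRankEnd k V := by
  show FiniteDimensional k (LinearMap.range (0 : Module.End k V))
  rw [LinearMap.range_zero]; infer_instance

lemma rankOne_mem_finiteRankEnd (φ : V →ₗ[k] k) (x : V) :
    φ.smulRight x ∈ finiteRankEnd k V := by
  haveI : FiniteDimensional k (Submodule.span k ({x} : Set V)) :=
    FiniteDimensional.span_of_finite k (Set.finite_singleton x)
  refine Submodule.finiteDimensional_of_le (S₂ := Submodule.span k {x}) ?_
  rintro y ⟨v, rfl⟩
  exact Submodule.mem_span_singleton.2 ⟨φ v, rfl⟩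

lemma mem_kPlusFiniteRank_of_mem {s : Module.End k V} (hs : s ∈ finiteRankEnd k V) :
    s ∈ kPlusFiniteRank k V := ⟨0, s, hs, by simp⟩

/-- The rank-one operator `v ↦ φ v • x` as an element of `R = k·1 + S`. -/
def rk1 (φ : V →ₗ[k] k) (x : V) : kPlusFiniteRank k V :=
  ⟨φ.smulRight x, mem_kPlusFiniteRank_of_mem (rankOne_mem_finiteRankEnd φ x)⟩

variable (k V) in
/-- `S` as a two-sided ideal of `R`. -/
def SIdeal : TwoSidedIdeal (kPlusFiniteRank k V) :=
  TwoSidedIdeal.mk' {f | (f : Module.End k V) ∈ finiteRankEnd k V}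
    (by simp only [Set.mem_setOf_eq, ZeroMemClass.coe_zero]; exact finiteRankEnd.zero)
    (fun hx hy => by
      simp only [Set.mem_setOf_eq, AddMemClass.coe_add] at *
      exact finiteRankEnd.add hx hy)
    (fun hx => by
      simp only [Set.mem_setOf_eq, NegMemClass.coe_neg] at *
      exact finiteRankEnd.neg hx)
    (fun {x y} hy => by
      simp only [Set.mem_setOf_eq, MulMemClass.coe_mul] at *
      exact finiteRankEnd.mul_right (x : Module.End k V) hy)
    (fun {x y} hx => by
      simp only [Set.mem_setOf_eq, MulMemClass.coe_mul] at *
      exact finiteRankEnd.mul_left (y : Module.End k V) hx)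

lemma exists_dual_one {u : V} (hu : u ≠ 0) : ∃ φ : V →ₗ[k] k, φ u = 1 := by
  obtain ⟨f, hf, -⟩ := Submodule.exists_dual_map_eq_bot_of_notMem (p := (⊥ : Submodule k V))
    (by simpa using hu) inferInstance
  exact ⟨(f u)⁻¹ • f, by simp [inv_mul_cancel₀ hf]⟩

lemma sum_rankOne {s : Module.End k V} (hs : s ∈ finiteRankEnd k V) :
    ∃ (n : ℕ) (φ : Fin n → (V →ₗ[k] k)) (x : Fin n → V),
      s = ∑ i, (φ i).smulRight (x i) := by
  haveI : FiniteDimensional k (LinearMap.range s) := hs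
  let b := Module.finBasis k (LinearMap.range s)
  refine ⟨_, fun i => (b.coord i).comp s.rangeRestrict, fun i => (b i : V), ?_⟩
  ext v
  have h1 : s v = ((s.rangeRestrict v : LinearMap.range s) : V) := rfl
  rw [h1, ← b.sum_repr (s.rangeRestrict v)]
  push_cast
  simp [Basis.coord_apply]

lemma rankOne_mem_of_ne_zero (I : TwoSidedIdeal (kPlusFiniteRank k V))
    {f : kPlusFiniteRank k V} (hfI : f ∈ I) (hf0 : f ≠ 0)
    (φ : V →ₗ[k] k) (x : V) : rk1 φ x ∈ I := by
  have hne : (f : Module.End k V) ≠ 0 := by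
    intro h
    exact hf0 (Subtype.ext (by simpa using h))
  obtain ⟨v, hv⟩ : ∃ v, (f : Module.End k V) v ≠ 0 := by
    by_contra h
    push_neg at h
    exact hne (LinearMap.ext (by simpa using h))
  obtain ⟨ψ, hψ⟩ := exists_dual_one (k := k) hv
  have hmem : rk1 ψ x * f * rk1 φ v ∈ I :=
    I.mul_mem_right _ _ (I.mul_mem_left _ _ hfI)
  have heq : rk1 ψ x * f * rk1 φ v = rk1 φ x := by
    apply Subtype.ext
    show ((rk1 ψ x : Module.End k V) * f * (rk1 φ v)) = (rk1 φ x : Module.End k V)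
    ext w
    simp only [rk1, Module.End.mul_apply, LinearMap.smulRight_apply, map_smul, smul_eq_mul, hψ,
      mul_one, smul_smul]
  rwa [heq] at hmem

lemma mem_ideal_of_finiteRank (I : TwoSidedIdeal (kPlusFiniteRank k V))
    (hI : ∀ (φ : V →ₗ[k] k) (x : V), rk1 φ x ∈ I)
    {f : kPlusFiniteRank k V} (hf : (f : Module.End k V) ∈ finiteRankEnd k V) : f ∈ I := by
  obtain ⟨n, φ, x, hx⟩ := sum_rankOne hf
  have : f = ∑ i, rk1 (φ i) (x i) := by
    apply Subtype.ext
    push_cast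
    exact hx
  rw [this]
  exact I.finsetSum_mem _ _ fun i _ => hI _ _

lemma not_mem_finiteRankEnd_of_ne (hV : ¬ Module.Finite k V) {a : k} (ha : a ≠ 0)
    {s : Module.End k V} (hs : s ∈ finiteRankEnd k V) :
    a • (1 : Module.End k V) + s ∉ finiteRankEnd k V := by
  intro h
  have h1 : (1 : Module.End k V) ∈ finiteRankEnd k V := by
    have := finiteRankEnd.smul a⁻¹ (finiteRankEnd.add h (finiteRankEnd.neg hs))
    simpa [smul_smul, inv_mul_cancel₀ ha] using this
  have : FiniteDimensional k (LinearMap.range (1 : Module.End k V)) := h1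
  rw [LinearMap.range_eq_top.2 (fun y => ⟨y, rfl⟩)] at this
  exact hV (Module.Finite.equiv (Submodule.topEquiv))

/-- For an infinite-dimensional vector space `V` over a field `k`, the two-sided ideals
of `R = k·1 + S` (where `S` is the ideal of finite-rank endomorphisms) are exactly
`0`, `S` and `R`. -/
theorem stmt13 (k : Type u) (V : Type v) [Field k] [AddCommGroup V] [Module k V]
    (hV : ¬ Module.Finite k V) :
    {s : Set (kPlusFiniteRank k V) |
        ∃ I : TwoSidedIdeal (kPlusFiniteRank k V), (I : Set (kPlusFiniteRank k V)) = s} =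
      { ({0} : Set (kPlusFiniteRank k V)),
        {f : kPlusFiniteRank k V | (f : Module.End k V) ∈ finiteRankEnd k V},
        Set.univ } := by
  ext s
  simp only [Set.mem_setOf_eq, Set.mem_insert_iff, Set.mem_singleton_iff]
  constructor
  · rintro ⟨I, rfl⟩
    by_cases h1 : ∀ f ∈ I, (f : Module.End k V) ∈ finiteRankEnd k V
    · by_cases h2 : ∀ f ∈ I, f = 0
      · left
        ext g
        exact ⟨fun hg => h2 g hg, fun hg => by
          rw [Set.mem_singleton_iff] at hg; rw [hg]; exact I.zero_mem⟩
      · push_neg at h2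
        obtain ⟨f, hfI, hf0⟩ := h2
        right; left
        ext g
        constructor
        · intro hg
          exact h1 g hg
        · intro hg
          exact mem_ideal_of_finiteRank I (rankOne_mem_of_ne_zero I hfI hf0) hg
    · push_neg at h1
      obtain ⟨f, hfI, hfS⟩ := h1
      obtain ⟨a, s', hs', hfs⟩ := f.2
      have ha : a ≠ 0 := by
        rintro rfl
        apply hfS
        show (f : Module.End k V) ∈ _
        rw [hfs, zero_smul, zero_add]
        exact hs'
      have hf0 : f ≠ 0 := by
        rintro rfl
        apply hfS
        show ((0 : kPlusFiniteRank k V) : Module.End k V) ∈ _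
        rw [ZeroMemClass.coe_zero]
        exact finiteRankEnd.zero
      have hrk : ∀ (φ : V →ₗ[k] k) (x : V), rk1 φ x ∈ I :=
        rankOne_mem_of_ne_zero I hfI hf0
      have hs'I : (⟨s', mem_kPlusFiniteRank_of_mem hs'⟩ : kPlusFiniteRank k V) ∈ I :=
        mem_ideal_of_finiteRank I hrk hs'
      have hcmem : (a⁻¹ • 1 : Module.End k V) ∈ kPlusFiniteRank k V :=
        ⟨a⁻¹, 0, finiteRankEnd.zero, by simp⟩
      have h1I : (1 : kPlusFiniteRank k V) ∈ I := by
        have hsub : f - ⟨s', mem_kPlusFiniteRank_of_mem hs'⟩ ∈ I := I.sub_mem hfI hs'I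
        have hm := I.mul_mem_left (⟨a⁻¹ • 1, hcmem⟩ : kPlusFiniteRank k V) _ hsub
        convert hm using 1
        apply Subtype.ext
        show (1 : Module.End k V) =
          (a⁻¹ • 1 : Module.End k V) * ((f : Module.End k V) - s')
        rw [hfs]
        simp [smul_smul, inv_mul_cancel₀ ha, mul_inv_cancel₀ ha]
      right; right
      ext g
      simp only [Set.mem_univ, iff_true, SetLike.mem_coe]
      have hm := I.mul_mem_left g 1 h1I
      simpa using hm
  · rintro (rfl | rfl | rfl)
    · exact ⟨⊥, by ext g; simp [TwoSidedIdeal.mem_bot]⟩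
    · refine ⟨SIdeal k V, ?_⟩
      ext g
      simp only [SIdeal, SetLike.mem_coe, TwoSidedIdeal.mem_mk', Set.mem_setOf_eq]
    · exact ⟨⊤, by ext g; simp [TwoSidedIdeal.mem_top]⟩
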